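/- Let Ŵ be a three times continuously differentiable real-valued function on a neighborhood of the identity in the space of 3×3 real matrices, set W(F) = Ŵ(FᵀF), assume W_F(I) = 0, and let L0 = W_FF(I). Fix M > 0. Then there exists a constant C > 0 such that for all λ ∈ (0, 1], all 3×3 matrices F with |F − I| ≤ M λ, all symmetric 3×3 matrices e with |e| ≤ M and |FᵀF − I − 2λ e| ≤ M λ², and all 3×3 matrices ξ, one has |(W_FF(F)ξ, ξ) − (L0 ξ_sym, ξ_sym) − λ (σ, ξᵀξ)| ≤ C (λ |ξ_sym| |ξ| + λ² |ξ|²), where σ = L0 e. -/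

import Mathlib

set_option maxHeartbeats 1600000


/- STATEMENT 2: Quantitative pointwise estimate for the second derivative of a
   frame-indifferent energy W(F) = Ŵ(FᵀF), Ŵ of class C³, W_F(I) = 0,
   L0 = W_FF(I): for all λ ∈ (0,1], |F − I| ≤ Mλ, e symmetric with |e| ≤ M,
   |FᵀF − I − 2λe| ≤ Mλ², and all ξ,
   |(W_FF(F)ξ,ξ) − (L0 ξ_sym, ξ_sym) − λ(σ, ξᵀξ)| ≤ C(λ|ξ_sym||ξ| + λ²|ξ|²),
   with σ = L0 e. -/

noncomputable section
open Matrix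

abbrev Mat3 := Matrix (Fin 3) (Fin 3) ℝ

attribute [local instance] Matrix.frobeniusNormedAddCommGroup Matrix.frobeniusNormedSpace

/-- Frobenius inner product (A,B) = Tr(A Bᵀ). -/
def frob (A B : Mat3) : ℝ := (A * Bᵀ).trace

/-- Frobenius norm. -/
noncomputable def frobNorm (A : Mat3) : ℝ := Real.sqrt (frob A A)

/-- Symmetric part ξ_sym = (ξ + ξᵀ)/2. -/
def symPart (A : Mat3) : Mat3 := (2⁻¹ : ℝ) • (A + Aᵀ)

/-! ### Auxiliary material -/

@[reducible] def matTop : TopologicalSpace Mat3 := PseudoMetricSpace.toUniformSpace.toTopologicalSpace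

section aux
attribute [local instance high] matTop

lemma frobNorm_eq (A : Mat3) : frobNorm A = ‖A‖ := by
  have h1 : frob A A = ∑ i, ∑ j, (A i j)^2 := by
    simp [frob, Matrix.trace, Matrix.mul_apply, Matrix.diag, sq]
  rw [frobNorm, h1, Matrix.frobenius_norm_def, Real.sqrt_eq_rpow]
  congr 1
  refine Finset.sum_congr rfl fun i _ => Finset.sum_congr rfl fun j _ => ?_
  rw [Real.rpow_two, Real.norm_eq_abs, sq_abs]

/-- The derivative of `F ↦ FᵀF`, as a continuous linear map in each variable. -/
def dqlin (F : Mat3) : Mat3 →ₗ[ℝ] Mat3 where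
  toFun ξ := ξᵀ * F + Fᵀ * ξ
  map_add' x y := by simp [Matrix.transpose_add, Matrix.add_mul, Matrix.mul_add]; abel
  map_smul' c x := by simp [Matrix.transpose_smul, Matrix.smul_mul, Matrix.mul_smul, smul_add]

def dq : Mat3 →L[ℝ] Mat3 →L[ℝ] Mat3 :=
  LinearMap.toContinuousLinearMap
  { toFun := fun F => LinearMap.toContinuousLinearMap (dqlin F)
    map_add' := by
      intro x y; ext ξ
      simp [dqlin, Matrix.transpose_add, Matrix.add_mul, Matrix.mul_add]; abel
    map_smul' := by
      intro c x; ext ξ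
      simp [dqlin, Matrix.transpose_smul, Matrix.smul_mul, Matrix.mul_smul, smul_add, mul_add] }

@[simp] lemma dq_apply (F ξ : Mat3) : dq F ξ = ξᵀ * F + Fᵀ * ξ := by
  simp [dq, dqlin]

lemma hasFDerivAt_q (F : Mat3) : HasFDerivAt (fun x : Mat3 => xᵀ * x) (dq F) F := by
  rw [hasFDerivAt_iff_isLittleO_nhds_zero]
  have hfe : (fun h : Mat3 => (F + h)ᵀ * (F + h) - Fᵀ * F - dq F h) = fun h => hᵀ * h := by
    funext h
    simp [Matrix.transpose_add, Matrix.add_mul, Matrix.mul_add]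
    abel
  rw [hfe]
  rw [Asymptotics.isLittleO_iff]
  intro c hc
  filter_upwards [Metric.ball_mem_nhds (0:Mat3) hc] with h hh
  rw [Metric.mem_ball, dist_zero_right] at hh
  have h1 : ‖hᵀ * h‖ ≤ ‖h‖ * ‖h‖ := by
    simpa [Matrix.frobenius_norm_transpose] using Matrix.frobenius_norm_mul hᵀ h
  calc ‖hᵀ * h‖ ≤ ‖h‖ * ‖h‖ := h1
    _ ≤ c * ‖h‖ := by nlinarith [norm_nonneg h]

section chain
variable (What : Mat3 → ℝ)

lemma hasFDerivAt_W (hWd : Differentiable ℝ What) (F : Mat3) :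
    HasFDerivAt (fun x : Mat3 => What (xᵀ * x))
      ((fderiv ℝ What (Fᵀ*F)).comp (dq F)) F := by
  have h := HasFDerivAt.comp (g := What) (f := fun x : Mat3 => xᵀ * x) F
    ((hWd (Fᵀ*F)).hasFDerivAt) (hasFDerivAt_q F)
  exact h

lemma key2 (hWd : Differentiable ℝ What) (hgd : Differentiable ℝ (fderiv ℝ What))
    (F ξ η : Mat3) :
    iteratedFDeriv ℝ 2 (fun x : Mat3 => What (xᵀ * x)) F ![ξ, η]
      = fderiv ℝ (fderiv ℝ What) (Fᵀ*F) (dq F ξ) (dq F η)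
        + fderiv ℝ What (Fᵀ*F) (dq ξ η) := by
  rw [iteratedFDeriv_two_apply]
  show fderiv ℝ (fderiv ℝ fun x : Mat3 => What (xᵀ * x)) F ξ η = _
  set g := fderiv ℝ What with hg
  set B := fderiv ℝ g with hB
  have hfW : (fderiv ℝ fun x : Mat3 => What (xᵀ * x)) = fun x => (g (xᵀ*x)).comp (dq x) :=
    funext fun x => (hasFDerivAt_W What hWd x).fderiv
  have h1 : HasFDerivAt (fun x : Mat3 => g (xᵀ*x)) ((B (Fᵀ*F)).comp (dq F)) F := by
    have h := HasFDerivAt.comp (g := g) (f := fun x : Mat3 => xᵀ * x) F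
      ((hgd (Fᵀ*F)).hasFDerivAt) (hasFDerivAt_q F)
    exact h
  have hpair : HasFDerivAt (fun x : Mat3 => (g (xᵀ*x), dq x))
      (((B (Fᵀ*F)).comp (dq F)).prod dq) F := h1.prodMk (dq.hasFDerivAt)
  have hbil := (isBoundedBilinearMap_comp (𝕜 := ℝ) (E := Mat3) (F := Mat3) (G := ℝ)).hasFDerivAt
      (g (Fᵀ*F), dq F)
  have hΦ := hbil.comp F hpair
  have hfd := hΦ.fderiv
  rw [hfW, show (fun x : Mat3 => (g (xᵀ*x)).comp (dq x))
      = ((fun p : (Mat3 →L[ℝ] ℝ) × (Mat3 →L[ℝ] Mat3) => p.1.comp p.2)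
          ∘ (fun x : Mat3 => (g (xᵀ*x), dq x))) from rfl, hfd]
  simp [IsBoundedBilinearMap.deriv_apply, ContinuousLinearMap.comp_apply,
    ContinuousLinearMap.prod_apply, ContinuousLinearMap.add_apply]
  ring

end chain

lemma bil_bound (L : Mat3 →L[ℝ] Mat3 →L[ℝ] ℝ) (a b : Mat3) : |L a b| ≤ ‖L‖ * ‖a‖ * ‖b‖ := by
  calc |L a b| = ‖L a b‖ := (Real.norm_eq_abs _).symm
    _ ≤ ‖L a‖ * ‖b‖ := (L a).le_opNorm b
    _ ≤ ‖L‖ * ‖a‖ * ‖b‖ :=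
        mul_le_mul_of_nonneg_right (L.le_opNorm a) (norm_nonneg b)

lemma lin_bound (L : Mat3 →L[ℝ] ℝ) (a : Mat3) : |L a| ≤ ‖L‖ * ‖a‖ := by
  calc |L a| = ‖L a‖ := (Real.norm_eq_abs _).symm
    _ ≤ ‖L‖ * ‖a‖ := L.le_opNorm a

lemma mul3_le {a b c a' b' c' : ℝ} (h1 : a ≤ a') (h2 : b ≤ b') (h3 : c ≤ c')
    (hb : 0 ≤ b) (hc : 0 ≤ c) (ha' : 0 ≤ a') (hb' : 0 ≤ b') : a*b*c ≤ a'*b'*c' :=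
  mul_le_mul (mul_le_mul h1 h2 hb ha') h3 hc (mul_nonneg ha' hb')

end aux

theorem second_variation_pointwise_estimate
    (What : Mat3 → ℝ) (hWhat : ContDiff ℝ 3 What)
    (W : Mat3 → ℝ) (hWdef : ∀ F : Mat3, W F = What (Fᵀ * F))
    (hW0 : fderiv ℝ W 1 = 0)
    (L0 : Mat3 →ₗ[ℝ] Mat3)
    (hL0 : ∀ ξ η : Mat3, frob (L0 ξ) η = iteratedFDeriv ℝ 2 W 1 ![ξ, η])
    (M : ℝ) (hM : 0 < M) :
    ∃ C : ℝ, 0 < C ∧ ∀ lam : ℝ, lam ∈ Set.Ioc (0:ℝ) 1 →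
      ∀ F e ξ : Mat3, frobNorm (F - 1) ≤ M * lam →
        eᵀ = e → frobNorm e ≤ M → frobNorm (Fᵀ * F - 1 - (2 * lam) • e) ≤ M * lam ^ 2 →
        |iteratedFDeriv ℝ 2 W F ![ξ, ξ]
            - frob (L0 (symPart ξ)) (symPart ξ)
            - lam * frob (L0 e) (ξᵀ * ξ)|
          ≤ C * (lam * frobNorm (symPart ξ) * frobNorm ξ + lam ^ 2 * frobNorm ξ ^ 2) := by
  letI : TopologicalSpace Mat3 := matTop
  replace hW0 : fderiv ℝ W 1 = 0 := hW0
  have hWeq : W = fun F : Mat3 => What (Fᵀ * F) := funext hWdef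
  subst hWeq
  have hWd : Differentiable ℝ What := hWhat.differentiable (by norm_num)
  have hgC : ContDiff ℝ 2 (fderiv ℝ What) := hWhat.fderiv_right (by norm_num)
  have hgd : Differentiable ℝ (fderiv ℝ What) := hgC.differentiable (by norm_num)
  have hBC : ContDiff ℝ 1 (fderiv ℝ (fderiv ℝ What)) := hgC.fderiv_right (by norm_num)
  have hBd : Differentiable ℝ (fderiv ℝ (fderiv ℝ What)) := hBC.differentiable (by norm_num)
  -- vanishing of the first derivative of What at 1 on symmetric matrices
  have hg1 : ∀ u : Mat3, uᵀ = u → fderiv ℝ What 1 u = 0 := by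
    intro u hu
    have hW1 : fderiv ℝ (fun x : Mat3 => What (xᵀ*x)) 1
        = (fderiv ℝ What ((1:Mat3)ᵀ*1)).comp (dq 1) := (hasFDerivAt_W What hWd 1).fderiv
    have h0 : (fderiv ℝ What (1:Mat3)).comp (dq 1) = 0 := by
      have h := hW1.symm.trans hW0
      simpa [Matrix.transpose_one, Matrix.mul_one] using h
    have h5 : dq (1:Mat3) ((2⁻¹:ℝ) • u) = u := by
      rw [dq_apply]
      simp only [Matrix.transpose_smul, hu, Matrix.transpose_one, Matrix.smul_mul,
        Matrix.one_mul, Matrix.mul_one]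
      rw [← add_smul]; norm_num
    have h6 := congrArg (fun L : Mat3 →L[ℝ] ℝ => L ((2⁻¹:ℝ)•u)) h0
    simp only [ContinuousLinearMap.comp_apply, ContinuousLinearMap.zero_apply] at h6
    rw [h5] at h6; exact h6
  -- bounds on the second and third derivative of What near 1
  obtain ⟨K2, hK2⟩ := (isCompact_closedBall (1:Mat3) (3*M)).exists_bound_of_continuousOn
    ((hgC.continuous_fderiv (by norm_num)).continuousOn)
  obtain ⟨K3, hK3⟩ := (isCompact_closedBall (1:Mat3) (3*M)).exists_bound_of_continuousOn
    ((hBC.continuous_fderiv (by norm_num)).continuousOn)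
  have hK2'0 : (0:ℝ) ≤ max K2 0 := le_max_right _ _
  have hK3'0 : (0:ℝ) ≤ max K3 0 := le_max_right _ _
  have hmemball : ∀ x : Mat3, ‖x - 1‖ ≤ 3*M → x ∈ Metric.closedBall (1:Mat3) (3*M) := by
    intro x hx; rwa [Metric.mem_closedBall, dist_eq_norm]
  have hBbound : ∀ x : Mat3, ‖x-1‖ ≤ 3*M → ‖fderiv ℝ (fderiv ℝ What) x‖ ≤ max K2 0 :=
    fun x hx => le_trans (hK2 x (hmemball x hx)) (le_max_left _ _)
  have hLip : ∀ x : Mat3, ‖x-1‖ ≤ 3*M →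
      ‖fderiv ℝ (fderiv ℝ What) x - fderiv ℝ (fderiv ℝ What) 1‖ ≤ max K3 0 * ‖x-1‖ := by
    intro x hx
    exact Convex.norm_image_sub_le_of_norm_fderiv_le
      (fun y _ => hBd y)
      (fun y hy => (hK3 y hy).trans (le_max_left _ _))
      (convex_closedBall _ _)
      (hmemball 1 (by rw [sub_self, norm_zero]; linarith))
      (hmemball x hx)
  have hTay : ∀ x : Mat3, ‖x-1‖ ≤ 3*M →
      ‖fderiv ℝ What x - fderiv ℝ What 1 - fderiv ℝ (fderiv ℝ What) 1 (x-1)‖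
        ≤ max K3 0 * (‖x-1‖ * ‖x-1‖) := by
    intro x hx
    set h : Mat3 → (Mat3 →L[ℝ] ℝ) :=
      fun y => fderiv ℝ What y - fderiv ℝ What 1 - fderiv ℝ (fderiv ℝ What) 1 (y - 1) with hh
    have hd : ∀ y : Mat3, HasFDerivAt h
        (fderiv ℝ (fderiv ℝ What) y - fderiv ℝ (fderiv ℝ What) 1) y := by
      intro y
      have h1 : HasFDerivAt (fderiv ℝ What) (fderiv ℝ (fderiv ℝ What) y) y := (hgd y).hasFDerivAt
      have h2 : HasFDerivAt (fun z : Mat3 => fderiv ℝ (fderiv ℝ What) 1 (z - 1))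
          (fderiv ℝ (fderiv ℝ What) 1) y := by
        have h3 := (fderiv ℝ (fderiv ℝ What) 1).hasFDerivAt (x := y)
        have h4 : (fun z : Mat3 => fderiv ℝ (fderiv ℝ What) 1 z - fderiv ℝ (fderiv ℝ What) 1 1)
            = fun z : Mat3 => fderiv ℝ (fderiv ℝ What) 1 (z - 1) := by
          funext z; rw [map_sub]
        have h5 := h3.sub_const (fderiv ℝ (fderiv ℝ What) 1 1)
        rw [h4] at h5; exact h5
      exact (h1.sub_const (fderiv ℝ What 1)).sub h2
    have hres := Convex.norm_image_sub_le_of_norm_fderiv_le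
      (f := h) (s := Metric.closedBall (1:Mat3) ‖x-1‖)
      (fun y _ => (hd y).differentiableAt)
      (fun y hy => by
        rw [(hd y).fderiv]
        have hy1 : ‖y - 1‖ ≤ ‖x-1‖ := by rwa [Metric.mem_closedBall, dist_eq_norm] at hy
        calc ‖fderiv ℝ (fderiv ℝ What) y - fderiv ℝ (fderiv ℝ What) 1‖
            ≤ max K3 0 * ‖y-1‖ := hLip y (hy1.trans hx)
          _ ≤ max K3 0 * ‖x-1‖ := mul_le_mul_of_nonneg_left hy1 hK3'0)
      (convex_closedBall _ _)
      (Metric.mem_closedBall_self (norm_nonneg _))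
      (Metric.mem_closedBall.mpr (le_of_eq (dist_eq_norm _ _)))
    have h10 : h 1 = 0 := by simp [hh]
    rw [h10, sub_zero] at hres
    calc ‖h x‖ ≤ max K3 0 * ‖x-1‖ * ‖x-1‖ := hres
      _ = max K3 0 * (‖x-1‖*‖x-1‖) := by ring
  -- the constant
  refine ⟨12*(max K3 0)*M + 8*(max K2 0)*M + 4*(max K2 0)*M^2 + 18*(max K3 0)*M^2
      + 2*(max K2 0)*M + 1, ?_, ?_⟩
  · nlinarith [mul_nonneg hK3'0 hM.le, mul_nonneg hK2'0 hM.le,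
      mul_nonneg (mul_nonneg hK2'0 hM.le) hM.le, mul_nonneg (mul_nonneg hK3'0 hM.le) hM.le]
  intro lam hlam F e ξ hF he hne hC2
  obtain ⟨hl0, hl1⟩ := hlam
  simp only [frobNorm_eq] at hF hne hC2 ⊢
  -- basic norm estimates
  have hsT : (symPart ξ)ᵀ = symPart ξ := by
    simp [symPart, Matrix.transpose_smul, Matrix.transpose_add, add_comm]
  have hzT : (ξᵀ*ξ)ᵀ = ξᵀ*ξ := by simp [Matrix.transpose_mul]
  have h3Ml : (0:ℝ) ≤ 3*M*lam := by nlinarith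
  have hDnorm : ‖Fᵀ*F - 1‖ ≤ 3*M*lam := by
    have hsplit : Fᵀ*F - 1 = (Fᵀ*F - 1 - (2*lam)•e) + (2*lam)•e := by abel
    have h2l : ‖((2*lam):ℝ)•e‖ ≤ 2*lam*M := by
      rw [norm_smul, Real.norm_eq_abs, abs_of_pos (by linarith)]
      exact mul_le_mul_of_nonneg_left hne (by linarith)
    calc ‖Fᵀ*F - 1‖ = ‖(Fᵀ*F - 1 - (2*lam)•e) + (2*lam)•e‖ := by rw [← hsplit]
      _ ≤ ‖Fᵀ*F - 1 - (2*lam)•e‖ + ‖((2*lam):ℝ)•e‖ := norm_add_le _ _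
      _ ≤ M*lam^2 + 2*lam*M := add_le_add hC2 h2l
      _ ≤ 3*M*lam := by nlinarith [mul_nonneg (mul_nonneg hM.le hl0.le) (sub_nonneg.2 hl1)]
  have hD3M : ‖Fᵀ*F - 1‖ ≤ 3*M := by nlinarith [mul_nonneg (mul_nonneg (by norm_num : (0:ℝ) ≤ 3) hM.le) (sub_nonneg.2 hl1)]
  have hs_le : ‖symPart ξ‖ ≤ ‖ξ‖ := by
    have h1 : ‖symPart ξ‖ = 2⁻¹ * ‖ξ + ξᵀ‖ := by
      rw [symPart, norm_smul, Real.norm_eq_abs]; norm_num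
    have h2 : ‖ξ + ξᵀ‖ ≤ ‖ξ‖ + ‖ξᵀ‖ := norm_add_le _ _
    rw [Matrix.frobenius_norm_transpose] at h2
    rw [h1]; linarith
  have hz_le : ‖ξᵀ*ξ‖ ≤ ‖ξ‖*‖ξ‖ := by
    have := Matrix.frobenius_norm_mul ξᵀ ξ
    rwa [Matrix.frobenius_norm_transpose] at this
  have ha : dq F ξ = (symPart ξ + symPart ξ) + (ξᵀ*(F-1) + (F-1)ᵀ*ξ) := by
    have hss : symPart ξ + symPart ξ = ξ + ξᵀ := by
      rw [symPart, ← add_smul]; norm_num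
    rw [dq_apply, hss]
    simp [Matrix.mul_sub, Matrix.sub_mul, Matrix.transpose_sub, Matrix.transpose_one,
      Matrix.mul_one, Matrix.one_mul]
    abel
  have hr_norm : ‖ξᵀ*(F-1) + (F-1)ᵀ*ξ‖ ≤ 2*(M*lam)*‖ξ‖ := by
    have h_a : ‖ξᵀ*(F-1)‖ ≤ ‖ξ‖*(M*lam) := by
      refine (Matrix.frobenius_norm_mul _ _).trans ?_
      rw [Matrix.frobenius_norm_transpose]
      exact mul_le_mul_of_nonneg_left hF (norm_nonneg ξ)
    have h_b : ‖(F-1)ᵀ*ξ‖ ≤ (M*lam)*‖ξ‖ := by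
      refine (Matrix.frobenius_norm_mul _ _).trans ?_
      rw [Matrix.frobenius_norm_transpose]
      exact mul_le_mul_of_nonneg_right hF (norm_nonneg ξ)
    calc ‖ξᵀ*(F-1) + (F-1)ᵀ*ξ‖ ≤ ‖ξᵀ*(F-1)‖ + ‖(F-1)ᵀ*ξ‖ := norm_add_le _ _
      _ ≤ ‖ξ‖*(M*lam) + (M*lam)*‖ξ‖ := add_le_add h_a h_b
      _ = 2*(M*lam)*‖ξ‖ := by ring
  -- rewrite the goal using the chain rule
  rw [hL0, hL0, key2 What hWd hgd F ξ ξ, key2 What hWd hgd 1 (symPart ξ) (symPart ξ),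
    key2 What hWd hgd 1 e (ξᵀ*ξ)]
  simp only [Matrix.transpose_one, Matrix.one_mul]
  -- identities
  have i1 : dq 1 (symPart ξ) = symPart ξ + symPart ξ := by
    rw [dq_apply]; simp [hsT]
  have i2 : dq 1 e = e + e := by rw [dq_apply]; simp [he]
  have i3 : dq 1 (ξᵀ*ξ) = ξᵀ*ξ + ξᵀ*ξ := by rw [dq_apply]; simp [hzT]
  have i4 : fderiv ℝ What 1 (dq (symPart ξ) (symPart ξ)) = 0 := by
    refine hg1 _ ?_
    rw [dq_apply]
    simp [Matrix.transpose_add, Matrix.transpose_mul]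
  have i5 : fderiv ℝ What 1 (dq e (ξᵀ*ξ)) = 0 := by
    refine hg1 _ ?_
    rw [dq_apply]
    simp only [Matrix.transpose_add, Matrix.transpose_mul, Matrix.transpose_transpose, hzT, he]
    abel
  have j1 : fderiv ℝ (fderiv ℝ What) 1 (symPart ξ + symPart ξ) (symPart ξ + symPart ξ)
      = 4 * fderiv ℝ (fderiv ℝ What) 1 (symPart ξ) (symPart ξ) := by
    simp only [map_add, ContinuousLinearMap.add_apply]; ring
  have j2 : fderiv ℝ (fderiv ℝ What) 1 (e + e) (ξᵀ*ξ + ξᵀ*ξ)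
      = 4 * fderiv ℝ (fderiv ℝ What) 1 e (ξᵀ*ξ) := by
    simp only [map_add, ContinuousLinearMap.add_apply]; ring
  have j3 : fderiv ℝ What (Fᵀ*F) (dq ξ ξ) = 2 * fderiv ℝ What (Fᵀ*F) (ξᵀ*ξ) := by
    rw [dq_apply, map_add]; ring
  have d1 : fderiv ℝ (fderiv ℝ What) (Fᵀ*F) (dq F ξ) (dq F ξ)
      = 4 * fderiv ℝ (fderiv ℝ What) (Fᵀ*F) (symPart ξ) (symPart ξ)
        + 2 * fderiv ℝ (fderiv ℝ What) (Fᵀ*F) (symPart ξ) (ξᵀ*(F-1) + (F-1)ᵀ*ξ)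
        + 2 * fderiv ℝ (fderiv ℝ What) (Fᵀ*F) (ξᵀ*(F-1) + (F-1)ᵀ*ξ) (symPart ξ)
        + fderiv ℝ (fderiv ℝ What) (Fᵀ*F) (ξᵀ*(F-1) + (F-1)ᵀ*ξ) (ξᵀ*(F-1) + (F-1)ᵀ*ξ) := by
    rw [ha]
    simp only [map_add, ContinuousLinearMap.add_apply]
    ring
  have d4 : fderiv ℝ (fderiv ℝ What) (Fᵀ*F) (symPart ξ) (symPart ξ)
      = fderiv ℝ (fderiv ℝ What) 1 (symPart ξ) (symPart ξ)
        + (fderiv ℝ (fderiv ℝ What) (Fᵀ*F) - fderiv ℝ (fderiv ℝ What) 1) (symPart ξ) (symPart ξ) := by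
    simp [ContinuousLinearMap.sub_apply]
  have d2 : fderiv ℝ What (Fᵀ*F) (ξᵀ*ξ)
      = fderiv ℝ (fderiv ℝ What) 1 (Fᵀ*F - 1) (ξᵀ*ξ)
        + (fderiv ℝ What (Fᵀ*F) - fderiv ℝ What 1 - fderiv ℝ (fderiv ℝ What) 1 (Fᵀ*F - 1)) (ξᵀ*ξ) := by
    simp [ContinuousLinearMap.sub_apply, hg1 (ξᵀ*ξ) hzT]
  have d3 : fderiv ℝ (fderiv ℝ What) 1 (Fᵀ*F - 1) (ξᵀ*ξ)
      = (2*lam) * fderiv ℝ (fderiv ℝ What) 1 e (ξᵀ*ξ)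
        + fderiv ℝ (fderiv ℝ What) 1 (Fᵀ*F - 1 - (2*lam)•e) (ξᵀ*ξ) := by
    have hsplit : Fᵀ*F - 1 = (2*lam)•e + (Fᵀ*F - 1 - (2*lam)•e) := by abel
    conv_lhs => rw [hsplit]
    simp only [map_add, _root_.map_smul, ContinuousLinearMap.add_apply,
      ContinuousLinearMap.smul_apply, smul_eq_mul]
  have main_eq :
      (fderiv ℝ (fderiv ℝ What) (Fᵀ*F) (dq F ξ) (dq F ξ) + fderiv ℝ What (Fᵀ*F) (dq ξ ξ))
        - (fderiv ℝ (fderiv ℝ What) 1 (dq 1 (symPart ξ)) (dq 1 (symPart ξ))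
            + fderiv ℝ What 1 (dq (symPart ξ) (symPart ξ)))
        - lam * (fderiv ℝ (fderiv ℝ What) 1 (dq 1 e) (dq 1 (ξᵀ*ξ))
            + fderiv ℝ What 1 (dq e (ξᵀ*ξ)))
      = 4 * ((fderiv ℝ (fderiv ℝ What) (Fᵀ*F) - fderiv ℝ (fderiv ℝ What) 1) (symPart ξ) (symPart ξ))
        + 2 * (fderiv ℝ (fderiv ℝ What) (Fᵀ*F) (symPart ξ) (ξᵀ*(F-1) + (F-1)ᵀ*ξ))
        + 2 * (fderiv ℝ (fderiv ℝ What) (Fᵀ*F) (ξᵀ*(F-1) + (F-1)ᵀ*ξ) (symPart ξ))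
        + (fderiv ℝ (fderiv ℝ What) (Fᵀ*F) (ξᵀ*(F-1) + (F-1)ᵀ*ξ) (ξᵀ*(F-1) + (F-1)ᵀ*ξ))
        + 2 * ((fderiv ℝ What (Fᵀ*F) - fderiv ℝ What 1 - fderiv ℝ (fderiv ℝ What) 1 (Fᵀ*F - 1)) (ξᵀ*ξ))
        + 2 * (fderiv ℝ (fderiv ℝ What) 1 (Fᵀ*F - 1 - (2*lam)•e) (ξᵀ*ξ)) := by
    rw [i1, i2, i3, i4, i5, j1, j2, j3, d1, d4, d2, d3]
    ring
  rw [main_eq]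
  -- abbreviate the error terms and basic quantities
  set E1 : ℝ := (fderiv ℝ (fderiv ℝ What) (Fᵀ*F) - fderiv ℝ (fderiv ℝ What) 1) (symPart ξ) (symPart ξ) with hE1
  set E2 : ℝ := fderiv ℝ (fderiv ℝ What) (Fᵀ*F) (symPart ξ) (ξᵀ*(F-1) + (F-1)ᵀ*ξ) with hE2
  set E3 : ℝ := fderiv ℝ (fderiv ℝ What) (Fᵀ*F) (ξᵀ*(F-1) + (F-1)ᵀ*ξ) (symPart ξ) with hE3
  set E4 : ℝ := fderiv ℝ (fderiv ℝ What) (Fᵀ*F) (ξᵀ*(F-1) + (F-1)ᵀ*ξ) (ξᵀ*(F-1) + (F-1)ᵀ*ξ) with hE4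
  set E5 : ℝ := (fderiv ℝ What (Fᵀ*F) - fderiv ℝ What 1 - fderiv ℝ (fderiv ℝ What) 1 (Fᵀ*F - 1)) (ξᵀ*ξ) with hE5
  set E6 : ℝ := fderiv ℝ (fderiv ℝ What) 1 (Fᵀ*F - 1 - (2*lam)•e) (ξᵀ*ξ) with hE6
  -- bounds on the error terms
  have hBClip : ‖fderiv ℝ (fderiv ℝ What) (Fᵀ*F) - fderiv ℝ (fderiv ℝ What) 1‖
      ≤ max K3 0 * (3*M*lam) :=
    (hLip _ hD3M).trans (mul_le_mul_of_nonneg_left hDnorm hK3'0)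
  have hBCb : ‖fderiv ℝ (fderiv ℝ What) (Fᵀ*F)‖ ≤ max K2 0 := hBbound _ hD3M
  have hB1b : ‖fderiv ℝ (fderiv ℝ What) 1‖ ≤ max K2 0 :=
    hBbound 1 (by rw [sub_self, norm_zero]; linarith)
  have hr0 : (0:ℝ) ≤ 2*(M*lam)*‖ξ‖ := by
    have := norm_nonneg ξ; nlinarith
  have b1 : |(fderiv ℝ (fderiv ℝ What) (Fᵀ*F) - fderiv ℝ (fderiv ℝ What) 1) (symPart ξ) (symPart ξ)|
      ≤ (max K3 0 * (3*M*lam)) * ‖symPart ξ‖ * ‖ξ‖ :=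
    (bil_bound _ _ _).trans (mul3_le hBClip le_rfl hs_le (norm_nonneg _) (norm_nonneg _)
      (mul_nonneg hK3'0 h3Ml) (norm_nonneg _))
  have b2 : |fderiv ℝ (fderiv ℝ What) (Fᵀ*F) (symPart ξ) (ξᵀ*(F-1) + (F-1)ᵀ*ξ)|
      ≤ max K2 0 * ‖symPart ξ‖ * (2*(M*lam)*‖ξ‖) :=
    (bil_bound _ _ _).trans (mul3_le hBCb le_rfl hr_norm (norm_nonneg _) (norm_nonneg _)
      hK2'0 (norm_nonneg _))
  have b3 : |fderiv ℝ (fderiv ℝ What) (Fᵀ*F) (ξᵀ*(F-1) + (F-1)ᵀ*ξ) (symPart ξ)|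
      ≤ max K2 0 * (2*(M*lam)*‖ξ‖) * ‖symPart ξ‖ :=
    (bil_bound _ _ _).trans (mul3_le hBCb hr_norm le_rfl (norm_nonneg _) (norm_nonneg _)
      hK2'0 hr0)
  have b4 : |fderiv ℝ (fderiv ℝ What) (Fᵀ*F) (ξᵀ*(F-1) + (F-1)ᵀ*ξ) (ξᵀ*(F-1) + (F-1)ᵀ*ξ)|
      ≤ max K2 0 * (2*(M*lam)*‖ξ‖) * (2*(M*lam)*‖ξ‖) :=
    (bil_bound _ _ _).trans (mul3_le hBCb hr_norm hr_norm (norm_nonneg _) (norm_nonneg _)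
      hK2'0 hr0)
  have b5 : |(fderiv ℝ What (Fᵀ*F) - fderiv ℝ What 1 - fderiv ℝ (fderiv ℝ What) 1 (Fᵀ*F - 1)) (ξᵀ*ξ)|
      ≤ (max K3 0 * ((3*M*lam) * (3*M*lam))) * (‖ξ‖*‖ξ‖) := by
    refine (lin_bound _ _).trans ?_
    have hq1 : ‖fderiv ℝ What (Fᵀ*F) - fderiv ℝ What 1 - fderiv ℝ (fderiv ℝ What) 1 (Fᵀ*F - 1)‖
        ≤ max K3 0 * ((3*M*lam) * (3*M*lam)) := by
      refine (hTay _ hD3M).trans (mul_le_mul_of_nonneg_left ?_ hK3'0)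
      exact mul_le_mul hDnorm hDnorm (norm_nonneg _) h3Ml
    exact mul_le_mul hq1 hz_le (norm_nonneg _)
      (mul_nonneg hK3'0 (mul_nonneg h3Ml h3Ml))
  have b6 : |fderiv ℝ (fderiv ℝ What) 1 (Fᵀ*F - 1 - (2*lam)•e) (ξᵀ*ξ)|
      ≤ max K2 0 * (M*lam^2) * (‖ξ‖*‖ξ‖) := by
    refine (bil_bound _ _ _).trans ?_
    have hml2 : (0:ℝ) ≤ M*lam^2 := by positivity
    exact mul3_le hB1b hC2 hz_le (norm_nonneg _) (norm_nonneg _) hK2'0 hml2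
  -- put everything together
  clear hE1 hE2 hE3 hE4 hE5 hE6 main_eq d1 d2 d3 d4 i1 i2 i3 i4 i5 j1 j2 j3 ha
    hBClip hBCb hB1b hg1 hLip hTay hBbound hK2 hK3 hmemball hC2 hF hne hDnorm hD3M
  obtain ⟨b1l, b1r⟩ := abs_le.mp b1
  obtain ⟨b2l, b2r⟩ := abs_le.mp b2
  obtain ⟨b3l, b3r⟩ := abs_le.mp b3
  obtain ⟨b4l, b4r⟩ := abs_le.mp b4
  obtain ⟨b5l, b5r⟩ := abs_le.mp b5
  obtain ⟨b6l, b6r⟩ := abs_le.mp b6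
  set ns := ‖symPart ξ‖ with hns
  set nx := ‖ξ‖ with hnx
  set k2 := max K2 0 with hk2
  set k3 := max K3 0 with hk3
  have hXnn : (0:ℝ) ≤ lam * ‖symPart ξ‖ * ‖ξ‖ :=
    mul_nonneg (mul_nonneg hl0.le (norm_nonneg _)) (norm_nonneg _)
  have hYnn : (0:ℝ) ≤ lam^2 * ‖ξ‖^2 := by positivity
  have hc1 : (0:ℝ) ≤ 4*(max K2 0)*M^2 + 18*(max K3 0)*M^2 + 2*(max K2 0)*M + 1 := by
    nlinarith [mul_nonneg hK2'0 (sq_nonneg M), mul_nonneg hK3'0 (sq_nonneg M),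
      mul_nonneg hK2'0 hM.le]
  have hc2 : (0:ℝ) ≤ 12*(max K3 0)*M + 8*(max K2 0)*M + 1 := by
    nlinarith [mul_nonneg hK3'0 hM.le, mul_nonneg hK2'0 hM.le]
  have hint1 : (0:ℝ) ≤ (4*(max K2 0)*M^2 + 18*(max K3 0)*M^2 + 2*(max K2 0)*M + 1)
      * (lam * ‖symPart ξ‖ * ‖ξ‖) := mul_nonneg hc1 hXnn
  have hint2 : (0:ℝ) ≤ (12*(max K3 0)*M + 8*(max K2 0)*M + 1) * (lam^2 * ‖ξ‖^2) :=
    mul_nonneg hc2 hYnn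
  rw [abs_le]
  refine ⟨by linarith [hint1, hint2], by linarith [hint1, hint2]⟩
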